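/- Symmetric form of the explicit distribution: under the same hypotheses, P(X_{n,m}=k) also equals (∏_{h=1}^{m} β_h)(∏_{h=k+1}^{n} α_h) · Σ_{ℓ=k}^{n} 1/[(∏_{j=k, j≠ℓ}^{n}(α_j − α_ℓ)) · (∏_{i=1}^{m}(β_i + α_ℓ))]; in particular the two multiple-sum expressions are equal as rational identities in pairwise distinct positive reals α_k,...,α_n, β_1,...,β_m. -/

import Mathlib

open Finset

/-- Urn model I (sampling with general weights): probability that `k` white balls remain when
all black balls have been drawn. -/
noncomputable def urnP (α β : ℕ → ℝ) : ℕ → ℕ → ℕ → ℝ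
  | n, 0, k => if k = n then 1 else 0
  | 0, _ + 1, k => if k = 0 then 1 else 0
  | n + 1, m + 1, k =>
      α (n + 1) / (α (n + 1) + β (m + 1)) * urnP α β n (m + 1) k
        + β (m + 1) / (α (n + 1) + β (m + 1)) * urnP α β (n + 1) m k

theorem urn_lagrange_eval (s : Finset ℕ) (v : ℕ → ℝ) (hs : s.Nonempty)
    (hinj : Set.InjOn v s) (x : ℝ) :
    ∑ i ∈ s, ∏ j ∈ s.erase i, ((v i - v j)⁻¹ * (x - v j)) = 1 := by
  have h := Lagrange.sum_basis hinj hs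
  have := congrArg (Polynomial.eval x) h
  simp only [Polynomial.eval_finset_sum, Polynomial.eval_one] at this
  rw [← this]
  refine Finset.sum_congr rfl fun i hi => ?_
  rw [Lagrange.basis, Polynomial.eval_prod]
  refine Finset.prod_congr rfl fun j hj => ?_
  simp [Lagrange.basisDivisor]

theorem urn_PF (s : Finset ℕ) (v : ℕ → ℝ) (t : ℝ) (hs : s.Nonempty) (hinj : Set.InjOn v s)
    (hnz : ∀ j ∈ s, v j + t ≠ 0) :
    ∑ i ∈ s, ((v i + t) * ∏ j ∈ s.erase i, (v j - v i))⁻¹ = (∏ j ∈ s, (v j + t))⁻¹ := by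
  have hQ : (∏ j ∈ s, (v j + t)) ≠ 0 := Finset.prod_ne_zero_iff.mpr hnz
  have key : (∏ j ∈ s, (v j + t)) * ∑ i ∈ s, ((v i + t) * ∏ j ∈ s.erase i, (v j - v i))⁻¹
      = 1 := by
    rw [Finset.mul_sum]
    rw [← urn_lagrange_eval s v hs hinj (-t)]
    refine Finset.sum_congr rfl fun i hi => ?_
    have hvi : v i + t ≠ 0 := hnz i hi
    rw [← Finset.mul_prod_erase _ _ hi, mul_inv, mul_mul_mul_comm, mul_inv_cancel₀ hvi, one_mul,
      ← Finset.prod_inv_distrib, ← Finset.prod_mul_distrib]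
    refine Finset.prod_congr rfl fun j hj => ?_
    have h1 : v j - v i ≠ 0 := by
      rw [Finset.mem_erase] at hj
      exact sub_ne_zero_of_ne fun h => hj.1 (hinj hj.2 hi h)
    have h2 : v i - v j ≠ 0 := fun h => h1 (by linarith [sub_eq_zero.mp h])
    field_simp
    ring
  field_simp at key ⊢
  linarith [key]

theorem urn_leadZero (s : Finset ℕ) (v : ℕ → ℝ) (h2 : 2 ≤ s.card) (hinj : Set.InjOn v s) :
    ∑ i ∈ s, ∏ j ∈ s.erase i, (v i - v j)⁻¹ = 0 := by
  have hs : s.Nonempty := Finset.card_pos.mp (by omega)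
  have h := Lagrange.sum_basis hinj hs
  have hc : (∑ j ∈ s, Lagrange.basis s v j).coeff (s.card - 1)
      = (1 : Polynomial ℝ).coeff (s.card - 1) := by rw [h]
  rw [Polynomial.finset_sum_coeff] at hc
  have hone : (1 : Polynomial ℝ).coeff (s.card - 1) = 0 := by
    rw [Polynomial.coeff_one, if_neg (by omega)]
  rw [hone] at hc
  rw [← hc]
  refine Finset.sum_congr rfl fun i hi => ?_
  have hdeg : (Lagrange.basis s v i).natDegree = s.card - 1 :=
    Lagrange.natDegree_basis hinj hi
  rw [← hdeg, ← Polynomial.leadingCoeff]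
  rw [Lagrange.basis, Polynomial.leadingCoeff_prod]
  refine Finset.prod_congr rfl fun j hj => ?_
  have hne : v i ≠ v j := by
    rw [Finset.mem_erase] at hj
    exact fun h => hj.1 (hinj hj.2 hi h.symm)
  rw [Lagrange.basisDivisor, Polynomial.leadingCoeff_mul, Polynomial.leadingCoeff_C,
    Polynomial.leadingCoeff_X_sub_C, mul_one]

theorem urn_Zero (s : Finset ℕ) (v : ℕ → ℝ) (h2 : 2 ≤ s.card) (hinj : Set.InjOn v s) :
    ∑ i ∈ s, (∏ j ∈ s.erase i, (v j - v i))⁻¹ = 0 := by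
  have hinj' : Set.InjOn (fun j => -(v j)) s := fun a ha b hb hab =>
    hinj ha hb (by simpa using neg_injective hab)
  have := urn_leadZero s (fun j => -(v j)) h2 hinj'
  rw [← this]
  refine Finset.sum_congr rfl fun i hi => ?_
  rw [← Finset.prod_inv_distrib]
  refine Finset.prod_congr rfl fun j hj => ?_
  ring_nf

noncomputable def Ssum (α β : ℕ → ℝ) (n m k : ℕ) : ℝ :=
  ∑ ℓ ∈ Icc 1 m, ((∏ j ∈ Icc k n, (α j + β ℓ)) * ∏ i ∈ (Icc 1 m).erase ℓ, (β i - β ℓ))⁻¹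

theorem urn_alg1 (a P E : ℝ) (ha : a ≠ 0) (hP : P ≠ 0) (hE : E ≠ 0) :
    a * ((P * a) * E)⁻¹ = (P * E)⁻¹ := by
  field_simp

theorem urn_alg2 (a b P D : ℝ) (ha : a ≠ 0) (hb : b ≠ 0) (hP : P ≠ 0) (hD : D ≠ 0) :
    (a + b) * ((P * a) * (b * D))⁻¹ = (P * (b * D))⁻¹ + ((P * a) * D)⁻¹ := by
  field_simp

theorem urn_star (α β : ℕ → ℝ)
    (hαpos : ∀ j, 1 ≤ j → 0 < α j) (hβpos : ∀ i, 1 ≤ i → 0 < β i)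
    (hβdist : ∀ i ℓ, 1 ≤ i → 1 ≤ ℓ → i ≠ ℓ → β i ≠ β ℓ)
    (n m k : ℕ) (hk : 1 ≤ k) (hkn : k ≤ n + 1) :
    (α (n + 1) + β (m + 1)) * Ssum α β (n + 1) (m + 1) k
      = Ssum α β n (m + 1) k + Ssum α β (n + 1) m k := by
  simp only [Ssum]
  rw [Finset.mul_sum]
  have hsplit : ∀ ℓ ∈ Icc 1 (m + 1),
      (α (n + 1) + β (m + 1)) *
          ((∏ j ∈ Icc k (n + 1), (α j + β ℓ)) * ∏ i ∈ (Icc 1 (m + 1)).erase ℓ, (β i - β ℓ))⁻¹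
        = ((∏ j ∈ Icc k n, (α j + β ℓ)) * ∏ i ∈ (Icc 1 (m + 1)).erase ℓ, (β i - β ℓ))⁻¹
          + (if ℓ = m + 1 then 0 else
              ((∏ j ∈ Icc k (n + 1), (α j + β ℓ)) * ∏ i ∈ (Icc 1 m).erase ℓ, (β i - β ℓ))⁻¹) := by
    intro ℓ hℓ
    rw [Finset.mem_Icc] at hℓ
    have hβℓ : 0 < β ℓ := hβpos ℓ hℓ.1
    have hP : (0 : ℝ) < ∏ j ∈ Icc k n, (α j + β ℓ) :=
      Finset.prod_pos fun j hj => by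
        rw [Finset.mem_Icc] at hj; exact add_pos (hαpos j (by omega)) hβℓ
    have hPtop : ∏ j ∈ Icc k (n + 1), (α j + β ℓ)
        = (∏ j ∈ Icc k n, (α j + β ℓ)) * (α (n + 1) + β ℓ) :=
      Finset.prod_Icc_succ_top hkn _
    have ha : (0 : ℝ) < α (n + 1) + β ℓ := add_pos (hαpos (n + 1) (by omega)) hβℓ
    by_cases hc : ℓ = m + 1
    · have hE : (∏ i ∈ (Icc 1 (m + 1)).erase ℓ, (β i - β ℓ)) ≠ 0 :=
        Finset.prod_ne_zero_iff.mpr fun i hi => by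
          rw [Finset.mem_erase, Finset.mem_Icc] at hi
          exact sub_ne_zero_of_ne (hβdist i ℓ (by omega) hℓ.1 hi.1)
      subst hc
      rw [if_pos rfl, add_zero, hPtop]
      exact urn_alg1 _ _ _ ha.ne' hP.ne' hE
    · rw [if_neg hc]
      have hℓm : ℓ ≤ m := by omega
      have hb : β (m + 1) - β ℓ ≠ 0 :=
        sub_ne_zero_of_ne (hβdist (m + 1) ℓ (by omega) hℓ.1 (by omega))
      have hD : (∏ i ∈ (Icc 1 m).erase ℓ, (β i - β ℓ)) ≠ 0 :=
        Finset.prod_ne_zero_iff.mpr fun i hi => by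
          rw [Finset.mem_erase, Finset.mem_Icc] at hi
          exact sub_ne_zero_of_ne (hβdist i ℓ (by omega) hℓ.1 hi.1)
      have hset : (Icc 1 (m + 1)).erase ℓ = insert (m + 1) ((Icc 1 m).erase ℓ) := by
        ext x
        simp only [Finset.mem_erase, Finset.mem_Icc, Finset.mem_insert]
        omega
      have hE1 : ∏ i ∈ (Icc 1 (m + 1)).erase ℓ, (β i - β ℓ)
          = (β (m + 1) - β ℓ) * ∏ i ∈ (Icc 1 m).erase ℓ, (β i - β ℓ) := by
        rw [hset, Finset.prod_insert (by simp only [Finset.mem_erase, Finset.mem_Icc]; omega)]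
      rw [hPtop, hE1]
      have habsum : α (n + 1) + β (m + 1) = (α (n + 1) + β ℓ) + (β (m + 1) - β ℓ) := by ring
      rw [habsum]
      exact urn_alg2 _ _ _ _ ha.ne' hb hP.ne' hD
  rw [Finset.sum_congr rfl hsplit, Finset.sum_add_distrib]
  congr 1
  rw [Finset.sum_Icc_succ_top (by omega : 1 ≤ m + 1), if_pos rfl, add_zero]
  exact Finset.sum_congr rfl fun ℓ hℓ => by
    rw [Finset.mem_Icc] at hℓ
    rw [if_neg (by omega)]

theorem urnP_zero (α β : ℕ → ℝ) : ∀ N n m k, n + m ≤ N → n < k → urnP α β n m k = 0 := by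
  intro N
  induction N with
  | zero =>
    intro n m k h1 h2
    have hn : n = 0 := by omega
    have hm : m = 0 := by omega
    subst hn; subst hm
    simp [urnP]
    omega
  | succ N ih =>
    intro n m k h1 h2
    match n, m with
    | n, 0 => simp [urnP]; omega
    | 0, m + 1 => simp [urnP]; omega
    | n + 1, m + 1 =>
      rw [urnP, ih n (m + 1) k (by omega) (by omega), ih (n + 1) m k (by omega) (by omega)]
      ring

theorem Ssum_m0 (α β : ℕ → ℝ) (n k : ℕ) : Ssum α β n 0 k = 0 := by simp [Ssum]

theorem Ssum_top (α β : ℕ → ℝ)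
    (hβdist : ∀ i ℓ, 1 ≤ i → 1 ≤ ℓ → i ≠ ℓ → β i ≠ β ℓ) (n m : ℕ) (hm : 2 ≤ m) :
    Ssum α β n m (n + 1) = 0 := by
  simp only [Ssum]
  rw [show Icc (n + 1) n = ∅ from Icc_eq_empty (by omega)]
  simp only [prod_empty, one_mul]
  refine urn_Zero (Icc 1 m) β (by simp [Nat.card_Icc]; omega) ?_
  intro a ha b hb hab
  simp only [Finset.coe_Icc, Set.mem_Icc] at ha hb
  by_contra hne
  exact hβdist a b ha.1 hb.1 hne hab

theorem urn_explicit (α β : ℕ → ℝ)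
    (hαpos : ∀ j, 1 ≤ j → 0 < α j) (hβpos : ∀ i, 1 ≤ i → 0 < β i)
    (hβdist : ∀ i ℓ, 1 ≤ i → 1 ≤ ℓ → i ≠ ℓ → β i ≠ β ℓ) :
    ∀ N n m k, n + m ≤ N → 1 ≤ m → 1 ≤ k → k ≤ n →
      urnP α β n m k
        = (∏ h ∈ Icc 1 m, β h) * (∏ h ∈ Icc (k + 1) n, α h) * Ssum α β n m k := by
  intro N
  induction N with
  | zero => intro n m k h1 hm hk hkn; omega
  | succ N ih =>
    intro n₀ m₀ k h1 hm hk hkn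
    obtain ⟨n, rfl⟩ : ∃ n', n₀ = n' + 1 := ⟨n₀ - 1, by omega⟩
    obtain ⟨m, rfl⟩ : ∃ m', m₀ = m' + 1 := ⟨m₀ - 1, by omega⟩
    have hk1 : k ≤ n + 1 := hkn
    have ha' : (0 : ℝ) < α (n + 1) := hαpos (n + 1) (by omega)
    have hb' : (0 : ℝ) < β (m + 1) := hβpos (m + 1) (by omega)
    have hc : α (n + 1) + β (m + 1) ≠ 0 := by positivity
    have hstar := urn_star α β hαpos hβpos hβdist n m k hk hk1
    rw [urnP]
    rcases Nat.eq_or_lt_of_le hk1 with hkeq | hklt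
    · -- k = n + 1
      have hz : urnP α β n (m + 1) k = 0 :=
        urnP_zero α β (n + m + 1) n (m + 1) k (by omega) (by omega)
      have hA : Icc (k + 1) (n + 1) = ∅ := Icc_eq_empty (by omega)
      rcases Nat.eq_zero_or_pos m with hm0 | hmpos
      · subst hm0
        simp only [Nat.zero_add] at hstar hc ⊢
        have hδ : urnP α β (n + 1) 0 k = 1 := by rw [urnP, if_pos (by omega)]
        have hS1 : Ssum α β n 1 k = 1 := by
          rw [hkeq]
          simp [Ssum, show Icc (n + 1) n = ∅ from Icc_eq_empty (by omega)]
        rw [hS1, Ssum_m0, add_zero] at hstar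
        rw [hz, hδ, hA]
        simp only [prod_empty, mul_zero, zero_add, mul_one, Finset.Icc_self,
          Finset.prod_singleton]
        rw [div_eq_iff hc]
        linear_combination (-(β 1)) * hstar
      · have h2 : urnP α β (n + 1) m k
            = (∏ h ∈ Icc 1 m, β h) * (∏ h ∈ Icc (k + 1) (n + 1), α h)
              * Ssum α β (n + 1) m k :=
          ih (n + 1) m k (by omega) hmpos hk hk1
        have hS1 : Ssum α β n (m + 1) k = 0 := by
          rw [hkeq]; exact Ssum_top α β hβdist n (m + 1) (by omega)
        rw [hS1, zero_add] at hstar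
        rw [hz, h2, hA]
        have hB : ∏ h ∈ Icc 1 (m + 1), β h = (∏ h ∈ Icc 1 m, β h) * β (m + 1) :=
          Finset.prod_Icc_succ_top (by omega) _
        rw [hB, prod_empty, mul_one, mul_one, mul_zero, zero_add, div_mul_eq_mul_div,
          div_eq_iff hc]
        linear_combination (-((∏ h ∈ Icc 1 m, β h) * β (m + 1))) * hstar
    · -- k ≤ n
      have hkn' : k ≤ n := by omega
      have hA : ∏ h ∈ Icc (k + 1) (n + 1), α h
          = (∏ h ∈ Icc (k + 1) n, α h) * α (n + 1) :=
        Finset.prod_Icc_succ_top (by omega) _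
      rcases Nat.eq_zero_or_pos m with hm0 | hmpos
      · subst hm0
        simp only [Nat.zero_add] at hstar hc ⊢
        have hδ : urnP α β (n + 1) 0 k = 0 := by rw [urnP, if_neg (by omega)]
        have h1' : urnP α β n 1 k
            = (∏ h ∈ Icc 1 1, β h) * (∏ h ∈ Icc (k + 1) n, α h) * Ssum α β n 1 k :=
          ih n 1 k (by omega) le_rfl hk hkn'
        rw [Ssum_m0, add_zero] at hstar
        rw [hδ, h1', hA, mul_zero, add_zero]
        simp only [Finset.Icc_self, Finset.prod_singleton]
        rw [div_mul_eq_mul_div, div_eq_iff hc]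
        linear_combination (-(β 1 * (∏ h ∈ Icc (k + 1) n, α h) * α (n + 1))) * hstar
      · have h1' : urnP α β n (m + 1) k
            = (∏ h ∈ Icc 1 (m + 1), β h) * (∏ h ∈ Icc (k + 1) n, α h)
              * Ssum α β n (m + 1) k :=
          ih n (m + 1) k (by omega) (by omega) hk hkn'
        have h2 : urnP α β (n + 1) m k
            = (∏ h ∈ Icc 1 m, β h) * (∏ h ∈ Icc (k + 1) (n + 1), α h)
              * Ssum α β (n + 1) m k :=
          ih (n + 1) m k (by omega) hmpos hk hk1
        have hB : ∏ h ∈ Icc 1 (m + 1), β h = (∏ h ∈ Icc 1 m, β h) * β (m + 1) :=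
          Finset.prod_Icc_succ_top (by omega) _
        rw [h1', h2, hA, hB, div_mul_eq_mul_div, div_mul_eq_mul_div, ← add_div,
          div_eq_iff hc]
        linear_combination (-((∏ h ∈ Icc 1 m, β h) * β (m + 1) * (∏ h ∈ Icc (k + 1) n, α h)
          * α (n + 1))) * hstar

/-- Symmetric form of the explicit distribution for urn model I, together with the underlying
rational identity: for pairwise distinct positive reals `α k, ..., α n` and `β 1, ..., β m`,
`∑_{ℓ=1}^m 1/[(∏_{j=k}^n (α j + β ℓ))(∏_{i≠ℓ}(β i - β ℓ))]
  = ∑_{ℓ=k}^n 1/[(∏_{j≠ℓ}(α j - α ℓ))(∏_{i=1}^m (β i + α ℓ))]`. -/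
theorem urnP_explicit_symmetric (α β : ℕ → ℝ)
    (hαpos : ∀ j, 1 ≤ j → 0 < α j) (hβpos : ∀ i, 1 ≤ i → 0 < β i)
    (hαdist : ∀ j ℓ, 1 ≤ j → 1 ≤ ℓ → j ≠ ℓ → α j ≠ α ℓ)
    (hβdist : ∀ i ℓ, 1 ≤ i → 1 ≤ ℓ → i ≠ ℓ → β i ≠ β ℓ)
    (n m k : ℕ) (hn : 1 ≤ n) (hm : 1 ≤ m) (hk : 1 ≤ k) (hkn : k ≤ n) :
    urnP α β n m k
      = (∏ h ∈ Icc 1 m, β h) * (∏ h ∈ Icc (k + 1) n, α h)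
        * ∑ ℓ ∈ Icc k n,
            ((∏ j ∈ (Icc k n).erase ℓ, (α j - α ℓ)) * ∏ i ∈ Icc 1 m, (β i + α ℓ))⁻¹
    ∧ (∑ ℓ ∈ Icc 1 m,
          ((∏ j ∈ Icc k n, (α j + β ℓ)) * ∏ i ∈ (Icc 1 m).erase ℓ, (β i - β ℓ))⁻¹
        = ∑ ℓ ∈ Icc k n,
            ((∏ j ∈ (Icc k n).erase ℓ, (α j - α ℓ)) * ∏ i ∈ Icc 1 m, (β i + α ℓ))⁻¹) := by
  have part2 : ∑ ℓ ∈ Icc 1 m,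
          ((∏ j ∈ Icc k n, (α j + β ℓ)) * ∏ i ∈ (Icc 1 m).erase ℓ, (β i - β ℓ))⁻¹
        = ∑ ℓ ∈ Icc k n,
            ((∏ j ∈ (Icc k n).erase ℓ, (α j - α ℓ)) * ∏ i ∈ Icc 1 m, (β i + α ℓ))⁻¹ := by
    have hsA : (Icc k n).Nonempty := Finset.nonempty_Icc.mpr hkn
    have hsB : (Icc 1 m).Nonempty := Finset.nonempty_Icc.mpr hm
    have hαinj : Set.InjOn α (Icc k n) := by
      intro a ha b hb hab
      simp only [Finset.coe_Icc, Set.mem_Icc] at ha hb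
      by_contra hne
      exact hαdist a b (by omega) (by omega) hne hab
    have hβinj : Set.InjOn β (Icc 1 m) := by
      intro a ha b hb hab
      simp only [Finset.coe_Icc, Set.mem_Icc] at ha hb
      by_contra hne
      exact hβdist a b ha.1 hb.1 hne hab
    have h1 : ∀ ℓ ∈ Icc 1 m,
        ((∏ j ∈ Icc k n, (α j + β ℓ)) * ∏ i ∈ (Icc 1 m).erase ℓ, (β i - β ℓ))⁻¹
          = ∑ h ∈ Icc k n, (∏ j ∈ (Icc k n).erase h, (α j - α h))⁻¹
              * ((β ℓ + α h) * ∏ i ∈ (Icc 1 m).erase ℓ, (β i - β ℓ))⁻¹ := by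
      intro ℓ hℓ
      rw [Finset.mem_Icc] at hℓ
      have hnz1 : ∀ j ∈ Icc k n, α j + β ℓ ≠ 0 := fun j hj => by
        rw [Finset.mem_Icc] at hj
        have := hαpos j (by omega)
        have := hβpos ℓ (by omega)
        positivity
      rw [mul_inv, ← urn_PF (Icc k n) α (β ℓ) hsA hαinj hnz1, Finset.sum_mul]
      refine Finset.sum_congr rfl fun h hh => ?_
      rw [mul_inv, mul_inv, add_comm (α h) (β ℓ)]
      ring
    rw [Finset.sum_congr rfl h1, Finset.sum_comm]
    refine Finset.sum_congr rfl fun h hh => ?_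
    rw [Finset.mem_Icc] at hh
    have hnz2 : ∀ i ∈ Icc 1 m, β i + α h ≠ 0 := fun i hi => by
      rw [Finset.mem_Icc] at hi
      have := hβpos i (by omega)
      have := hαpos h (by omega)
      positivity
    rw [← Finset.mul_sum, urn_PF (Icc 1 m) β (α h) hsB hβinj hnz2, ← mul_inv]
  have hS : Ssum α β n m k
      = ∑ ℓ ∈ Icc k n,
          ((∏ j ∈ (Icc k n).erase ℓ, (α j - α ℓ)) * ∏ i ∈ Icc 1 m, (β i + α ℓ))⁻¹ := part2
  have hexp := urn_explicit α β hαpos hβpos hβdist (n + m) n m k le_rfl hm hk hkn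
  exact ⟨by rw [hexp, hS], part2⟩
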